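/- Let ρ ∈ (0,1), L_u ≥ 0, μ ≥ 1, m ≥ μ, ū ≥ 0, ε ≥ 0. Let h_S : ℕ → ℝ satisfy 0 ≤ h_S(i) ≤ L_u for i = 1,…,μ and 0 ≤ h_S(i) ≤ L_u·ρ^(i−μ) for i > μ; let u : ℤ → ℝ satisfy |u(k)| ≤ ū for all k; let y(k) := Σ_{i=1}^∞ h_S(i)·u(k−i); let v : ℤ → ℝ satisfy |v(k)| ≤ ε for all k, and set ỹ(k) := y(k) + v(k). Define the regressor φ(k) := (u(k−1), u(k−2), …, u(k−m)) ∈ ℝ^m and the truncated true model h_m := (h_S(1), …, h_S(m)) ∈ ℝ^m. Then for every k ∈ ℤ, |ỹ(k) − φ(k)ᵀh_m| ≤ η_m + ε, where η_m := ū·L_u·ρ^(m−μ)·ρ/(1−ρ). Consequently, for every t and every block length s ≥ 1, h_m belongs to the non-falsified set Δ_s(t) := {h ∈ ℝ^m : |ỹ(k) − φ(k)ᵀh| ≤ η_m + ε for all k ∈ {t−s, …, t−1}}. -/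
import Mathlib


/-- The truncated true impulse response is never falsified: every measurement
satisfies `|ỹ(k) − φ(k)ᵀ h_m| ≤ η_m + ε`, hence `h_m` belongs to every
non-falsified set `Δ_s(t)`. -/
theorem true_model_in_nonfalsified_set
    (ρ L ubar ε : ℝ) (μ m : ℕ)
    (hρ : ρ ∈ Set.Ioo (0 : ℝ) 1) (hL : 0 ≤ L) (hμ : 1 ≤ μ) (hm : μ ≤ m)
    (hubar : 0 ≤ ubar) (hε : 0 ≤ ε)
    (hS : ℕ → ℝ)
    (hS1 : ∀ i, 1 ≤ i → i ≤ μ → 0 ≤ hS i ∧ hS i ≤ L)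
    (hS2 : ∀ i, μ < i → 0 ≤ hS i ∧ hS i ≤ L * ρ ^ (i - μ))
    (u : ℤ → ℝ) (hu : ∀ k, |u k| ≤ ubar)
    (v : ℤ → ℝ) (hv : ∀ k, |v k| ≤ ε)
    (y : ℤ → ℝ) (hy : ∀ k, y k = ∑' i : ℕ, hS (i + 1) * u (k - (i + 1)))
    (ytilde : ℤ → ℝ) (hyt : ∀ k, ytilde k = y k + v k)
    (φ : ℤ → Fin m → ℝ) (hφ : ∀ k (j : Fin m), φ k j = u (k - ((j : ℕ) + 1)))
    (hm' : Fin m → ℝ) (hhm : ∀ j : Fin m, hm' j = hS ((j : ℕ) + 1)) :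
    (∀ k : ℤ, |ytilde k - ∑ j, φ k j * hm' j| ≤
        ubar * L * ρ ^ (m - μ) * ρ / (1 - ρ) + ε) ∧
      ∀ t : ℤ, ∀ s : ℕ, 1 ≤ s →
        hm' ∈ {h : Fin m → ℝ | ∀ k : ℤ, t - s ≤ k → k ≤ t - 1 →
          |ytilde k - ∑ j, φ k j * h j| ≤
            ubar * L * ρ ^ (m - μ) * ρ / (1 - ρ) + ε} := by
  obtain ⟨hρ0, hρ1⟩ := hρ
  have h1ρ : 0 < 1 - ρ := by linarith
  have key : ∀ k : ℤ, |ytilde k - ∑ j, φ k j * hm' j| ≤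
      ubar * L * ρ ^ (m - μ) * ρ / (1 - ρ) + ε := by
    intro k
    set g : ℕ → ℝ := fun i => hS (i + 1) * u (k - (i + 1)) with hg
    have hbound : ∀ i : ℕ, μ ≤ i → |g i| ≤ ubar * L * ρ ^ (i + 1 - μ) := by
      intro i hi
      have h2 := hS2 (i + 1) (by omega)
      have habs : |g i| = |hS (i + 1)| * |u (k - (i + 1))| := abs_mul _ _
      rw [habs, abs_of_nonneg h2.1]
      calc hS (i + 1) * |u (k - (i + 1))|
          ≤ (L * ρ ^ (i + 1 - μ)) * ubar :=
            mul_le_mul h2.2 (hu _) (abs_nonneg _) (by positivity)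
        _ = ubar * L * ρ ^ (i + 1 - μ) := by ring
    have hgeo : Summable (fun i : ℕ => (ubar * L * ρ) * ρ ^ i) :=
      (summable_geometric_of_lt_one hρ0.le hρ1).mul_left _
    have hsum : Summable g := by
      rw [← summable_nat_add_iff μ]
      apply Summable.of_abs
      apply Summable.of_nonneg_of_le (fun i => abs_nonneg _) (fun i => ?_) hgeo
      have := hbound (i + μ) (by omega)
      have heq : i + μ + 1 - μ = i + 1 := by omega
      rw [heq] at this
      calc |g (i + μ)| ≤ ubar * L * ρ ^ (i + 1) := this
        _ = ubar * L * ρ * ρ ^ i := by ring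
    have hy' : y k = ∑' i : ℕ, g i := hy k
    have hpart : ∑ j, φ k j * hm' j = ∑ i ∈ Finset.range m, g i := by
      have : ∀ j : Fin m, φ k j * hm' j = g (j : ℕ) := by
        intro j; rw [hφ, hhm, hg]; push_cast; ring_nf
      rw [Finset.sum_congr rfl (fun j _ => this j)]
      exact Fin.sum_univ_eq_sum_range g m
    have hsplit : (∑ i ∈ Finset.range m, g i) + ∑' i, g (i + m) = ∑' i, g i :=
      Summable.sum_add_tsum_nat_add m hsum
    have htail_bnd : ∀ i : ℕ, |g (i + m)| ≤
        (ubar * L * ρ ^ (m - μ) * ρ) * ρ ^ i := by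
      intro i
      have := hbound (i + m) (by omega)
      have heq : i + m + 1 - μ = (m - μ) + 1 + i := by omega
      rw [heq] at this
      calc |g (i + m)| ≤ ubar * L * ρ ^ ((m - μ) + 1 + i) := this
        _ = (ubar * L * ρ ^ (m - μ) * ρ) * ρ ^ i := by
            rw [pow_add, pow_add, pow_one]; ring
    have hgeo2 : Summable (fun i : ℕ => (ubar * L * ρ ^ (m - μ) * ρ) * ρ ^ i) :=
      (summable_geometric_of_lt_one hρ0.le hρ1).mul_left _
    have habs_sum : Summable (fun i => |g (i + m)|) :=
      Summable.of_nonneg_of_le (fun i => abs_nonneg _) htail_bnd hgeo2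
    have htail : |∑' i, g (i + m)| ≤ ubar * L * ρ ^ (m - μ) * ρ / (1 - ρ) := by
      have hnorm : ‖∑' i, g (i + m)‖ ≤ ∑' i, ‖g (i + m)‖ :=
        norm_tsum_le_tsum_norm (by simp only [Real.norm_eq_abs]; exact habs_sum)
      simp only [Real.norm_eq_abs] at hnorm
      calc |∑' i, g (i + m)| ≤ ∑' i, |g (i + m)| := hnorm
        _ ≤ ∑' i : ℕ, (ubar * L * ρ ^ (m - μ) * ρ) * ρ ^ i :=
            Summable.tsum_le_tsum htail_bnd habs_sum hgeo2
        _ = (ubar * L * ρ ^ (m - μ) * ρ) * (1 - ρ)⁻¹ := by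
            rw [tsum_mul_left, tsum_geometric_of_lt_one hρ0.le hρ1]
        _ = ubar * L * ρ ^ (m - μ) * ρ / (1 - ρ) := by rw [div_eq_mul_inv]
    have hdecomp : ytilde k - ∑ j, φ k j * hm' j = (∑' i, g (i + m)) + v k := by
      rw [hyt k, hy', hpart, ← hsplit]; ring
    rw [hdecomp]
    calc |(∑' i, g (i + m)) + v k| ≤ |∑' i, g (i + m)| + |v k| := abs_add_le _ _
      _ ≤ ubar * L * ρ ^ (m - μ) * ρ / (1 - ρ) + ε := add_le_add htail (hv k)
  exact ⟨key, fun t s _ k _ _ => key k⟩
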